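/- With the same notation, λ_γ → λ as γ → ∞, where λ is the unique positive solution of λ·exp(λ²)·erf(λ) = (Ste/√π)·(1 + δ/(p+1)). -/

import Mathlib

open Real Filter

noncomputable def erf (x : ℝ) : ℝ := (2 / Real.sqrt π) * ∫ t in (0:ℝ)..x, Real.exp (-t^2)

lemma erf_integrable (a b : ℝ) : IntervalIntegrable (fun t => Real.exp (-t^2)) MeasureTheory.volume a b :=
  (Real.continuous_exp.comp (continuous_neg.comp (continuous_pow 2))).intervalIntegrable a b

lemma erf_nonneg {x : ℝ} (hx : 0 ≤ x) : 0 ≤ erf x := by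
  apply mul_nonneg (div_nonneg (by norm_num) (Real.sqrt_nonneg _))
  exact intervalIntegral.integral_nonneg hx (fun t _ => (Real.exp_pos _).le)

lemma erf_pos {x : ℝ} (hx : 0 < x) : 0 < erf x := by
  apply mul_pos (div_pos (by norm_num) (Real.sqrt_pos.mpr Real.pi_pos))
  exact intervalIntegral.intervalIntegral_pos_of_pos (erf_integrable 0 x)
    (fun t => Real.exp_pos _) hx

lemma erf_mono {a b : ℝ} (ha : 0 ≤ a) (hab : a ≤ b) : erf a ≤ erf b := by
  apply mul_le_mul_of_nonneg_left _ (div_nonneg (by norm_num) (Real.sqrt_nonneg _))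
  apply intervalIntegral.integral_mono_interval le_rfl ha hab
  · exact Filter.Eventually.of_forall (fun t => (Real.exp_pos _).le)
  · exact erf_integrable 0 b

lemma xex_mono_le {a b : ℝ} (ha : 0 ≤ a) (hab : a ≤ b) :
    a * Real.exp (a^2) ≤ b * Real.exp (b^2) := by
  have h2 : a^2 ≤ b^2 := by nlinarith
  calc a * Real.exp (a^2) ≤ a * Real.exp (b^2) :=
        mul_le_mul_of_nonneg_left (Real.exp_le_exp.mpr h2) ha
    _ ≤ b * Real.exp (b^2) := mul_le_mul_of_nonneg_right hab (Real.exp_pos _).le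

lemma xex_mono {a b : ℝ} (ha : 0 ≤ a) (hab : a < b) :
    a * Real.exp (a^2) < b * Real.exp (b^2) := by
  have h2 : a^2 ≤ b^2 := by nlinarith
  calc a * Real.exp (a^2) ≤ a * Real.exp (b^2) :=
        mul_le_mul_of_nonneg_left (Real.exp_le_exp.mpr h2) ha
    _ < b * Real.exp (b^2) := mul_lt_mul_of_pos_right hab (Real.exp_pos _)

lemma g_strictMono : StrictMonoOn (fun x => x * Real.exp (x^2) * erf x) (Set.Ici 0) := by
  intro a ha b hb hab
  simp only [Set.mem_Ici] at ha hb
  have h1 : a * Real.exp (a^2) * erf a ≤ a * Real.exp (a^2) * erf b :=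
    mul_le_mul_of_nonneg_left (erf_mono ha hab.le)
      (mul_nonneg ha (Real.exp_pos _).le)
  have h2 : a * Real.exp (a^2) * erf b < b * Real.exp (b^2) * erf b :=
    mul_lt_mul_of_pos_right (xex_mono ha hab) (erf_pos (ha.trans_lt hab))
  exact h1.trans_lt h2

/-- λ_γ → λ as γ → ∞. -/
theorem lambda_gamma_tendsto_lambda (δ p Ste l : ℝ) (hδ : 0 ≤ δ) (hp : 0 ≤ p)
    (hSte : 0 < Ste) (hl : 0 < l)
    (hlam : l * Real.exp (l^2) * erf l = (Ste / Real.sqrt π) * (1 + δ / (p + 1)))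
    (lam : ℝ → ℝ)
    (hlampos : ∀ γ > (0:ℝ), 0 < lam γ)
    (hβ : ∀ γ > (0:ℝ), 0 ≤ 1 - (2 * lam γ * Real.exp ((lam γ)^2)) / (γ * Ste))
    (heq : ∀ γ > (0:ℝ),
      (1 - (2 * lam γ * Real.exp ((lam γ)^2)) / (γ * Ste)) +
        (δ / (p + 1)) * (1 - (2 * lam γ * Real.exp ((lam γ)^2)) / (γ * Ste)) ^ (p + 1) =
      (Real.sqrt π / Ste) * (lam γ * Real.exp ((lam γ)^2) * erf (lam γ))) :
    Tendsto lam atTop (nhds l) := by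
  have hsπ : 0 < Real.sqrt π := Real.sqrt_pos.mpr Real.pi_pos
  set g : ℝ → ℝ := fun x => x * Real.exp (x^2) * erf x with hg
  set c : ℝ := δ / (p + 1) with hcdef
  have hc : 0 ≤ c := div_nonneg hδ (by linarith)
  set B : ℝ → ℝ := fun γ => 1 - (2 * lam γ * Real.exp ((lam γ)^2)) / (γ * Ste) with hBdef
  have hB1 : ∀ γ > (0:ℝ), B γ ≤ 1 := by
    intro γ hγ
    have h1 : 0 ≤ (2 * lam γ * Real.exp ((lam γ)^2)) / (γ * Ste) := by
      have := (hlampos γ hγ).le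
      positivity
    simp only [hBdef]; linarith
  have hkey : ∀ γ > (0:ℝ), g (lam γ) = (Ste / Real.sqrt π) * (B γ + c * B γ ^ (p + 1)) := by
    intro γ hγ
    have h : B γ + c * B γ ^ (p + 1) = (Real.sqrt π / Ste) * g (lam γ) := heq γ hγ
    rw [h, ← mul_assoc, div_mul_div_comm, mul_comm Ste (Real.sqrt π),
      div_self (by positivity), one_mul]
  have hgleq : g l = (Ste / Real.sqrt π) * (1 + c) := hlam
  have hle : ∀ γ > (0:ℝ), lam γ ≤ l := by
    intro γ hγ
    by_contra h
    push_neg at h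
    have hgl : g l < g (lam γ) :=
      g_strictMono (Set.mem_Ici.mpr hl.le) (Set.mem_Ici.mpr (hlampos γ hγ).le) h
    have hpow : B γ ^ (p + 1) ≤ 1 := Real.rpow_le_one (hβ γ hγ) (hB1 γ hγ) (by linarith)
    have hbound : g (lam γ) ≤ (Ste / Real.sqrt π) * (1 + c) := by
      rw [hkey γ hγ]
      apply mul_le_mul_of_nonneg_left _ (div_nonneg hSte.le hsπ.le)
      have := hB1 γ hγ
      nlinarith
    linarith [hgleq ▸ hbound]
  -- B γ → 1
  have hC : (0:ℝ) < 2 * l * Real.exp (l^2) / Ste := by positivity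
  have hBtend : Tendsto B atTop (nhds 1) := by
    have htend0 : Tendsto (fun γ : ℝ => 1 - (2 * l * Real.exp (l^2) / Ste) * γ⁻¹) atTop (nhds 1) := by
      have := (tendsto_inv_atTop_zero (𝕜 := ℝ)).const_mul (2 * l * Real.exp (l^2) / Ste)
      simpa using (tendsto_const_nhds (x := (1:ℝ)) (f := atTop)).sub this
    apply tendsto_of_tendsto_of_tendsto_of_le_of_le' htend0 tendsto_const_nhds
    · filter_upwards [eventually_gt_atTop (0:ℝ)] with γ hγ
      have hnum : 2 * lam γ * Real.exp ((lam γ)^2) ≤ 2 * l * Real.exp (l^2) := by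
        have := xex_mono_le (hlampos γ hγ).le (hle γ hγ)
        nlinarith
      have hdiv : (2 * lam γ * Real.exp ((lam γ)^2)) / (γ * Ste)
          ≤ (2 * l * Real.exp (l^2)) / (γ * Ste) := by
        apply div_le_div_of_nonneg_right hnum (by positivity) |>.trans_eq rfl
      have heqd : (2 * l * Real.exp (l^2)) / (γ * Ste) = (2 * l * Real.exp (l^2) / Ste) * γ⁻¹ := by
        field_simp
      simp only [hBdef]
      rw [← heqd] at *
      linarith
    · filter_upwards [eventually_gt_atTop (0:ℝ)] with γ hγ using hB1 γ hγ
  -- g (lam γ) → g l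
  have hgtend : Tendsto (fun γ => g (lam γ)) atTop (nhds (g l)) := by
    have hrpow : Tendsto (fun γ => B γ ^ (p + 1)) atTop (nhds 1) := by
      have hcont : ContinuousAt (fun x : ℝ => x ^ (p + 1)) 1 :=
        Real.continuousAt_rpow_const 1 (p + 1) (Or.inl one_ne_zero)
      have := hcont.tendsto.comp hBtend
      simpa [Function.comp_def] using this
    have : Tendsto (fun γ => (Ste / Real.sqrt π) * (B γ + c * B γ ^ (p + 1))) atTop
        (nhds ((Ste / Real.sqrt π) * (1 + c))) := by
      simpa using ((hBtend.add (hrpow.const_mul c)).const_mul (Ste / Real.sqrt π))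
    rw [hgleq]
    apply this.congr'
    filter_upwards [eventually_gt_atTop (0:ℝ)] with γ hγ using (hkey γ hγ).symm
  -- conclude
  rw [tendsto_order]
  constructor
  · intro a ha
    rcases le_or_gt a 0 with h0 | h0
    · filter_upwards [eventually_gt_atTop (0:ℝ)] with γ hγ
      exact lt_of_le_of_lt h0 (hlampos γ hγ)
    · have hga : g a < g l :=
        g_strictMono (Set.mem_Ici.mpr h0.le) (Set.mem_Ici.mpr hl.le) ha
      filter_upwards [hgtend.eventually_const_lt hga, eventually_gt_atTop (0:ℝ)] with γ hγ hγ0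
      by_contra hcon
      push_neg at hcon
      have : g (lam γ) ≤ g a := by
        rcases eq_or_lt_of_le hcon with he | hlt
        · rw [he]
        · exact (g_strictMono (Set.mem_Ici.mpr (hlampos γ hγ0).le)
            (Set.mem_Ici.mpr h0.le) hlt).le
      linarith
  · intro a ha
    filter_upwards [eventually_gt_atTop (0:ℝ)] with γ hγ
    exact lt_of_le_of_lt (hle γ hγ) ha
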